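/- For ν, λ > 0 and 0 < s < 8λ³ν²/27, the cubic equation s = 2ζ²(λ + ζ/ν) has exactly three distinct real solutions ζ₁ > ζ₂ > ζ₃, and they satisfy ζ₁ > 0 > ζ₂ > -2νλ/3 > ζ₃ > -νλ. -/

import Mathlib

theorem dual_cubic_three_roots (ν lam s : ℝ) (hν : 0 < ν) (hlam : 0 < lam)
    (hs0 : 0 < s) (hs : s < 8 * lam ^ 3 * ν ^ 2 / 27) :
    ∃ ζ₁ ζ₂ ζ₃ : ℝ,
      ζ₁ > 0 ∧ 0 > ζ₂ ∧ ζ₂ > -2 * ν * lam / 3 ∧ -2 * ν * lam / 3 > ζ₃ ∧ ζ₃ > -ν * lam ∧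
      s = 2 * ζ₁ ^ 2 * (lam + ζ₁ / ν) ∧
      s = 2 * ζ₂ ^ 2 * (lam + ζ₂ / ν) ∧
      s = 2 * ζ₃ ^ 2 * (lam + ζ₃ / ν) ∧
      (∀ ζ : ℝ, s = 2 * ζ ^ 2 * (lam + ζ / ν) → ζ = ζ₁ ∨ ζ = ζ₂ ∨ ζ = ζ₃) := by
  have hν' : ν ≠ 0 := ne_of_gt hν
  set f : ℝ → ℝ := fun x => 2 * x ^ 2 * (lam + x / ν) - s with hf
  have hcont : Continuous f := by
    apply Continuous.sub
    · exact (continuous_const.mul (continuous_pow 2)).mul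
        (continuous_const.add (continuous_id.div_const ν))
    · exact continuous_const
  -- values at key points
  have hfa : f (-ν * lam) = -s := by simp only [hf]; field_simp; ring
  have hfb : f (-2 * ν * lam / 3) = 8 * lam ^ 3 * ν ^ 2 / 27 - s := by
    simp only [hf]; field_simp; ring
  have hf0 : f 0 = -s := by simp [hf]
  obtain ⟨M, hM1, hMbig⟩ : ∃ M : ℝ, 1 < M ∧ s < 2 * M ^ 2 * lam := by
    have hd : 0 < s / (2 * lam) := div_pos hs0 (by linarith)
    have he : 2 * lam * (s / (2 * lam)) = s := by field_simp
    exact ⟨1 + s / (2 * lam), by linarith, by nlinarith⟩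
  have hfM : 0 < f M := by
    have hM0 : 0 < M := lt_trans one_pos hM1
    have h3 : 0 < M ^ 3 / ν := by positivity
    have hfMval : f M = 2 * M ^ 2 * lam + 2 * (M ^ 3 / ν) - s := by
      simp only [hf]; field_simp
    rw [hfMval]; linarith
  have hb3 : -ν * lam < -2 * ν * lam / 3 := by nlinarith
  have hb2 : -2 * ν * lam / 3 < 0 := by nlinarith
  have hfbpos : 0 < f (-2 * ν * lam / 3) := by rw [hfb]; linarith
  -- three roots by IVT
  obtain ⟨ζ₃, h3mem, h3eq⟩ : ∃ x ∈ Set.Ioo (-ν * lam) (-2 * ν * lam / 3), f x = 0 := by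
    have hsub := intermediate_value_Ioo (le_of_lt hb3) (hcont.continuousOn)
    have h : (0:ℝ) ∈ Set.Ioo (f (-ν * lam)) (f (-2 * ν * lam / 3)) := by
      rw [Set.mem_Ioo, hfa]; exact ⟨by linarith, hfbpos⟩
    obtain ⟨x, hx, hx0⟩ := hsub h
    exact ⟨x, hx, hx0⟩
  obtain ⟨ζ₂, h2mem, h2eq⟩ : ∃ x ∈ Set.Ioo (-2 * ν * lam / 3) 0, f x = 0 := by
    have hsub := intermediate_value_Ioo' (le_of_lt hb2) (hcont.continuousOn)
    have h : (0:ℝ) ∈ Set.Ioo (f 0) (f (-2 * ν * lam / 3)) := by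
      rw [Set.mem_Ioo, hf0]; exact ⟨by linarith, hfbpos⟩
    obtain ⟨x, hx, hx0⟩ := hsub h
    exact ⟨x, hx, hx0⟩
  obtain ⟨ζ₁, h1mem, h1eq⟩ : ∃ x ∈ Set.Ioo (0:ℝ) M, f x = 0 := by
    have hsub := intermediate_value_Ioo (le_of_lt (lt_trans one_pos hM1)) (hcont.continuousOn)
    have h : (0:ℝ) ∈ Set.Ioo (f 0) (f M) := by
      rw [Set.mem_Ioo, hf0]; exact ⟨by linarith, hfM⟩
    obtain ⟨x, hx, hx0⟩ := hsub h
    exact ⟨x, hx, hx0⟩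
  have e1 : s = 2 * ζ₁ ^ 2 * (lam + ζ₁ / ν) := by
    have := h1eq; simp only [hf] at this; linarith
  have e2 : s = 2 * ζ₂ ^ 2 * (lam + ζ₂ / ν) := by
    have := h2eq; simp only [hf] at this; linarith
  have e3 : s = 2 * ζ₃ ^ 2 * (lam + ζ₃ / ν) := by
    have := h3eq; simp only [hf] at this; linarith
  -- clear denominators form
  have hclear : ∀ a : ℝ, s = 2 * a ^ 2 * (lam + a / ν) →
      s * ν = 2 * a ^ 2 * lam * ν + 2 * a ^ 3 := by
    intro a ha
    have : s * ν = 2 * a ^ 2 * (lam + a / ν) * ν := by rw [← ha]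
    rw [this]; field_simp
  -- quadratic relation from two distinct roots
  have quad : ∀ a b : ℝ, s = 2 * a ^ 2 * (lam + a / ν) → s = 2 * b ^ 2 * (lam + b / ν) →
      a ≠ b → 2 * (a ^ 2 + a * b + b ^ 2) + 2 * ν * lam * (a + b) = 0 := by
    intro a b ha hb hab
    have ca := hclear a ha
    have cb := hclear b hb
    have key : (a - b) * (2 * (a ^ 2 + a * b + b ^ 2) + 2 * ν * lam * (a + b)) = 0 := by
      linear_combination cb - ca
    rcases mul_eq_zero.mp key with h | h
    · exact absurd (by linarith : a = b) hab
    · exact h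
  have h12 : ζ₁ ≠ ζ₂ := by
    rcases h1mem with ⟨h, _⟩; rcases h2mem with ⟨_, h'⟩; exact ne_of_gt (lt_trans h' h)
  have h13 : ζ₁ ≠ ζ₃ := by
    rcases h1mem with ⟨h, _⟩; rcases h3mem with ⟨_, h'⟩
    exact ne_of_gt (lt_trans (lt_trans h' hb2) h)
  have h23 : ζ₂ ≠ ζ₃ := by
    rcases h2mem with ⟨h, _⟩; rcases h3mem with ⟨_, h'⟩; exact ne_of_gt (lt_trans h' h)
  -- any root distinct from ζ₁, ζ₂ equals -ν*lam - ζ₁ - ζ₂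
  have third : ∀ ζ : ℝ, s = 2 * ζ ^ 2 * (lam + ζ / ν) → ζ ≠ ζ₁ → ζ ≠ ζ₂ →
      ζ = -(ν * lam) - ζ₁ - ζ₂ := by
    intro ζ hζ hne1 hne2
    have q1 := quad ζ ζ₁ hζ e1 hne1
    have q2 := quad ζ ζ₂ hζ e2 hne2
    have key : (ζ₁ - ζ₂) * (2 * (ζ + ζ₁ + ζ₂) + 2 * ν * lam) = 0 := by
      linear_combination q1 - q2
    rcases mul_eq_zero.mp key with h | h
    · exact absurd (by linarith : ζ₁ = ζ₂) h12
    · linarith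
  have h3val : ζ₃ = -(ν * lam) - ζ₁ - ζ₂ := third ζ₃ e3 (Ne.symm h13) (Ne.symm h23)
  refine ⟨ζ₁, ζ₂, ζ₃, h1mem.1, h2mem.2, h2mem.1, h3mem.2, h3mem.1, e1, e2, e3, ?_⟩
  intro ζ hζ
  by_cases hc1 : ζ = ζ₁
  · exact Or.inl hc1
  by_cases hc2 : ζ = ζ₂
  · exact Or.inr (Or.inl hc2)
  · exact Or.inr (Or.inr ((third ζ hζ hc1 hc2).trans h3val.symm))
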